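/- Let f₁, f₂ : ℝ² → ℝ² be C² vector fields and α₁, α₂ : ℝ² → ℝ be C¹ functions, and for each i consider the vector field ξᵢ on ℝ² × ℝ given by ξᵢ(x,u) = (fᵢ(x), αᵢ(x) + (u/2)·div fᵢ(x)). Then the Lie bracket [ξ₁,ξ₂] is again of this form: [ξ₁,ξ₂] = ξ_{f̂,α̂}, i.e. [ξ₁,ξ₂](x,u) = (f̂(x), α̂(x) + (u/2)·div f̂(x)), where f̂(x) = Df₂(x)(f₁(x)) − Df₁(x)(f₂(x)) and α̂(x) = Dα₂(x)(f₁(x)) − Dα₁(x)(f₂(x)) + ½(α₁(x)·div f₂(x) − α₂(x)·div f₁(x)). (This is the closure of the BMS Lie algebra 𝔟𝔪𝔰₄ of asymptotic Killing vectors, in a flat chart.) -/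

import Mathlib

/-- The divergence `div f = ∂₁f¹ + ∂₂f²` of a vector field on `ℝ²`. -/
noncomputable def divergence (f : (Fin 2 → ℝ) → (Fin 2 → ℝ)) (x : Fin 2 → ℝ) : ℝ :=
  ∑ i, fderiv ℝ f x (Pi.single i 1) i

/-- The flat-chart BMS generator on `ℝ² × ℝ` associated to a superrotation
vector field `f` and a supertranslation function `α`:
`ξ_{f,α}(x,u) = (f(x), α(x) + (u/2)·div f(x))`. -/
noncomputable def bmsGen (f : (Fin 2 → ℝ) → (Fin 2 → ℝ)) (α : (Fin 2 → ℝ) → ℝ) :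
    (Fin 2 → ℝ) × ℝ → (Fin 2 → ℝ) × ℝ :=
  fun p => (f p.1, α p.1 + p.2 / 2 * divergence f p.1)

/-- The trace functional on continuous linear endomorphisms of `Fin 2 → ℝ`. -/
noncomputable def trCLM : ((Fin 2 → ℝ) →L[ℝ] (Fin 2 → ℝ)) →L[ℝ] ℝ :=
  ∑ i, (ContinuousLinearMap.proj i).comp (ContinuousLinearMap.apply ℝ (Fin 2 → ℝ) (Pi.single i 1))

lemma trCLM_apply (L : (Fin 2 → ℝ) →L[ℝ] (Fin 2 → ℝ)) :
    trCLM L = ∑ i, L (Pi.single i 1) i := by simp [trCLM]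

lemma trace_comm (A B : (Fin 2 → ℝ) →L[ℝ] (Fin 2 → ℝ)) :
    ∑ i, B (A (Pi.single i 1)) i = ∑ i, A (B (Pi.single i 1)) i := by
  have expand : ∀ (C : (Fin 2 → ℝ) →L[ℝ] (Fin 2 → ℝ)) (w : Fin 2 → ℝ) (i : Fin 2),
      C w i = w 0 * C (Pi.single 0 1) i + w 1 * C (Pi.single 1 1) i := by
    intro C w i
    have hw : w = w 0 • (Pi.single 0 1 : Fin 2 → ℝ) + w 1 • (Pi.single 1 1 : Fin 2 → ℝ) := by
      funext j; fin_cases j <;> simp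
    conv_lhs => rw [hw]
    simp
  simp only [Fin.sum_univ_two]
  rw [expand B (A (Pi.single 0 1)) 0, expand B (A (Pi.single 1 1)) 1,
    expand A (B (Pi.single 0 1)) 0, expand A (B (Pi.single 1 1)) 1]
  ring

lemma divergence_eq (f : (Fin 2 → ℝ) → (Fin 2 → ℝ)) :
    divergence f = fun x => trCLM (fderiv ℝ f x) := by
  funext x; simp [divergence, trCLM_apply]

lemma fderiv_fderiv_hasFDerivAt {f : (Fin 2 → ℝ) → (Fin 2 → ℝ)} (hf : ContDiff ℝ 2 f)
    (x : Fin 2 → ℝ) :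
    HasFDerivAt (fderiv ℝ f) (fderiv ℝ (fderiv ℝ f) x) x :=
  (((hf.fderiv_right (m := 1) one_add_one_eq_two.le).differentiable one_ne_zero) x).hasFDerivAt

lemma divergence_hasFDerivAt {f : (Fin 2 → ℝ) → (Fin 2 → ℝ)} (hf : ContDiff ℝ 2 f)
    (x : Fin 2 → ℝ) :
    HasFDerivAt (divergence f) (trCLM.comp (fderiv ℝ (fderiv ℝ f) x)) x := by
  rw [divergence_eq]
  exact trCLM.hasFDerivAt.comp x (fderiv_fderiv_hasFDerivAt hf x)

lemma fderiv_divergence {f : (Fin 2 → ℝ) → (Fin 2 → ℝ)} (hf : ContDiff ℝ 2 f)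
    (x v : Fin 2 → ℝ) :
    fderiv ℝ (divergence f) x v = ∑ i, fderiv ℝ (fderiv ℝ f) x v (Pi.single i 1) i := by
  rw [(divergence_hasFDerivAt hf x).fderiv]
  simp [trCLM_apply]

/-- The full derivative of a BMS generator, applied to a tangent vector. -/
lemma bmsGen_fderiv_apply {f : (Fin 2 → ℝ) → (Fin 2 → ℝ)} {α : (Fin 2 → ℝ) → ℝ}
    (hf : ContDiff ℝ 2 f) (hα : ContDiff ℝ 1 α) (p v : (Fin 2 → ℝ) × ℝ) :
    fderiv ℝ (bmsGen f α) p v =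
      (fderiv ℝ f p.1 v.1,
        fderiv ℝ α p.1 v.1 + v.2 / 2 * divergence f p.1
          + p.2 / 2 * fderiv ℝ (divergence f) p.1 v.1) := by
  have h1 : HasFDerivAt (fun q : (Fin 2 → ℝ) × ℝ => f q.1)
      ((fderiv ℝ f p.1).comp (ContinuousLinearMap.fst ℝ (Fin 2 → ℝ) ℝ)) p :=
    ((hf.differentiable two_ne_zero) p.1).hasFDerivAt.comp p hasFDerivAt_fst
  have h2 : HasFDerivAt (fun q : (Fin 2 → ℝ) × ℝ => α q.1)
      ((fderiv ℝ α p.1).comp (ContinuousLinearMap.fst ℝ (Fin 2 → ℝ) ℝ)) p :=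
    ((hα.differentiable one_ne_zero) p.1).hasFDerivAt.comp p hasFDerivAt_fst
  have h3 : HasFDerivAt (fun q : (Fin 2 → ℝ) × ℝ => divergence f q.1)
      ((fderiv ℝ (divergence f) p.1).comp (ContinuousLinearMap.fst ℝ (Fin 2 → ℝ) ℝ)) p := by
    exact (divergence_hasFDerivAt hf p.1).fderiv ▸
      ((divergence_hasFDerivAt hf p.1).comp p hasFDerivAt_fst)
  have h4 : HasFDerivAt (fun q : (Fin 2 → ℝ) × ℝ => q.2 / 2)
      ((2⁻¹ : ℝ) • ContinuousLinearMap.snd ℝ (Fin 2 → ℝ) ℝ) p := by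
    simpa [div_eq_mul_inv] using
      (hasFDerivAt_snd (𝕜 := ℝ) (E := Fin 2 → ℝ) (F := ℝ) (p := p)).mul_const (2⁻¹ : ℝ)
  have h := h1.prodMk (h2.add (h4.mul h3))
  have h' : HasFDerivAt (bmsGen f α) _ p := h
  rw [h'.fderiv]
  simp [ContinuousLinearMap.prod_apply]
  ring

/-- The divergence of the bracket of two `C²` vector fields. -/
lemma divergence_bracket {f₁ f₂ : (Fin 2 → ℝ) → (Fin 2 → ℝ)}
    (hf₁ : ContDiff ℝ 2 f₁) (hf₂ : ContDiff ℝ 2 f₂) (x : Fin 2 → ℝ) :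
    divergence (fun y => fderiv ℝ f₂ y (f₁ y) - fderiv ℝ f₁ y (f₂ y)) x
      = fderiv ℝ (divergence f₂) x (f₁ x) - fderiv ℝ (divergence f₁) x (f₂ x) := by
  have h2 : HasFDerivAt (fun y => fderiv ℝ f₂ y (f₁ y))
      ((fderiv ℝ f₂ x).comp (fderiv ℝ f₁ x) + (fderiv ℝ (fderiv ℝ f₂) x).flip (f₁ x)) x :=
    (fderiv_fderiv_hasFDerivAt hf₂ x).clm_apply ((hf₁.differentiable two_ne_zero) x).hasFDerivAt
  have h1 : HasFDerivAt (fun y => fderiv ℝ f₁ y (f₂ y))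
      ((fderiv ℝ f₁ x).comp (fderiv ℝ f₂ x) + (fderiv ℝ (fderiv ℝ f₁) x).flip (f₂ x)) x :=
    (fderiv_fderiv_hasFDerivAt hf₁ x).clm_apply ((hf₂.differentiable two_ne_zero) x).hasFDerivAt
  have hg : fderiv ℝ (fun y => fderiv ℝ f₂ y (f₁ y) - fderiv ℝ f₁ y (f₂ y)) x = _ :=
    (h2.sub h1).fderiv
  have symm₂ := (hf₂.contDiffAt (x := x)).isSymmSndFDerivAt (by simp)
  have symm₁ := (hf₁.contDiffAt (x := x)).isSymmSndFDerivAt (by simp)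
  rw [fderiv_divergence hf₂, fderiv_divergence hf₁]
  simp only [divergence, hg]
  simp only [ContinuousLinearMap.sub_apply, ContinuousLinearMap.add_apply,
    ContinuousLinearMap.comp_apply, ContinuousLinearMap.flip_apply, Pi.sub_apply, Pi.add_apply]
  have key := trace_comm (fderiv ℝ f₁ x) (fderiv ℝ f₂ x)
  simp only [Fin.sum_univ_two] at key ⊢
  rw [symm₂ (Pi.single 0 1) (f₁ x), symm₂ (Pi.single 1 1) (f₁ x),
    symm₁ (Pi.single 0 1) (f₂ x), symm₁ (Pi.single 1 1) (f₂ x)]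
  linarith

/-- Closure of the BMS Lie algebra `𝔟𝔪𝔰₄` in a flat chart: the Lie bracket
`[ξ₁,ξ₂](p) = Dξ₂(p)(ξ₁(p)) − Dξ₁(p)(ξ₂(p))` of two BMS generators is again a
BMS generator `ξ_{f̂,α̂}`, with `f̂ = Df₂(f₁) − Df₁(f₂)` and
`α̂ = Dα₂(f₁) − Dα₁(f₂) + ½(α₁·div f₂ − α₂·div f₁)`. -/
theorem bms_lie_algebra_closes
    (f₁ f₂ : (Fin 2 → ℝ) → (Fin 2 → ℝ)) (α₁ α₂ : (Fin 2 → ℝ) → ℝ)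
    (hf₁ : ContDiff ℝ 2 f₁) (hf₂ : ContDiff ℝ 2 f₂)
    (hα₁ : ContDiff ℝ 1 α₁) (hα₂ : ContDiff ℝ 1 α₂) :
    ∀ p : (Fin 2 → ℝ) × ℝ,
      fderiv ℝ (bmsGen f₂ α₂) p (bmsGen f₁ α₁ p)
        - fderiv ℝ (bmsGen f₁ α₁) p (bmsGen f₂ α₂ p) =
      bmsGen (fun x => fderiv ℝ f₂ x (f₁ x) - fderiv ℝ f₁ x (f₂ x))
        (fun x => fderiv ℝ α₂ x (f₁ x) - fderiv ℝ α₁ x (f₂ x)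
          + (α₁ x * divergence f₂ x - α₂ x * divergence f₁ x) / 2) p := by
  intro p
  rw [bmsGen_fderiv_apply hf₂ hα₂, bmsGen_fderiv_apply hf₁ hα₁]
  simp only [bmsGen, Prod.mk_sub_mk, Prod.mk.injEq]
  refine ⟨trivial, ?_⟩
  rw [divergence_bracket hf₁ hf₂]
  ring
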